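/- Let f₀, g₀, ω > 0, p, q > 0 with pq > 1, C_p, C_q > 0, and let (f, g) be non-negative C¹ solutions on [0, T) of f' + (ω/(q+1)) f = (p+1) C_p g^p, g' + (ω/(p+1)) g = (q+1) C_q f^q with f(0) = f₀, g(0) = g₀. If f₀ > max( 2^{((p+1)/(q+1))·(pq/(pq-1))} (q+1)^{-(p+1)/(pq-1)} (p+1)^{-(p+1)/(pq-1)} ω^{(p+1)/(pq-1)} C_p^{-1/(pq-1)} C_q^{-p/(pq-1)}, C_q^{-1/(q+1)} C_p^{1/(q+1)} g₀^{(p+1)/(q+1)} ), then for all t ∈ [0, T): e^{ωt/(p+1)} g(t) ≥ { (C_p/C_q)^{(pq-1)/((p+1)(q+1))} f₀^{-(pq-1)/(p+1)} - 2^{-pq/(q+1)} (q+1)(p+1) ω⁻¹ C_q^{1/(q+1)} C_p^{q/(q+1)} (1 - e^{-ω(pq-1)t/((p+1)(q+1))}) }^{-(q+1)/(pq-1)} - ( C_q C_p^{-1} f₀^{q+1} - g₀^{p+1} )^{1/(p+1)}. -/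

import Mathlib

open Real Set

-- convexity: (a+b)^r ≤ 2^(r-1) (a^r + b^r)
lemma aux_convex {a b r : ℝ} (ha : 0 ≤ a) (hb : 0 ≤ b) (hr : 1 ≤ r) :
    (a + b) ^ r ≤ 2 ^ (r - 1) * (a ^ r + b ^ r) := by
  have h := NNReal.rpow_add_le_mul_rpow_add_rpow a.toNNReal b.toNNReal hr
  have h2 := NNReal.coe_le_coe.2 h
  push_cast [NNReal.coe_rpow, Real.coe_toNNReal _ ha, Real.coe_toNNReal _ hb] at h2
  exact h2

-- superadditivity: a^r + b^r ≤ (a+b)^r for r ≥ 1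
lemma aux_super {a b r : ℝ} (ha : 0 ≤ a) (hb : 0 ≤ b) (hr : 1 ≤ r) :
    a ^ r + b ^ r ≤ (a + b) ^ r := by
  have h := NNReal.add_rpow_le_rpow_add a.toNNReal b.toNNReal hr
  have h2 := NNReal.coe_le_coe.2 h
  push_cast [NNReal.coe_rpow, Real.coe_toNNReal _ ha, Real.coe_toNNReal _ hb] at h2
  exact h2

lemma aux_exp_rpow (a b : ℝ) : (Real.exp a) ^ b = Real.exp (a * b) := by
  rw [Real.rpow_def_of_pos (Real.exp_pos a), Real.log_exp]

set_option maxHeartbeats 1000000 in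
theorem stmt_8 (f₀ g₀ ω Cp Cq T p q : ℝ)
    (hf₀ : 0 < f₀) (hg₀ : 0 < g₀) (hω : 0 < ω)
    (hCp : 0 < Cp) (hCq : 0 < Cq) (hT : 0 < T)
    (hp : 0 < p) (hq : 0 < q) (hpq : 1 < p * q)
    (f g : ℝ → ℝ)
    (hfnn : ∀ t ∈ Set.Ico (0 : ℝ) T, 0 ≤ f t) (hgnn : ∀ t ∈ Set.Ico (0 : ℝ) T, 0 ≤ g t)
    (hf' : ∀ t ∈ Set.Ico (0 : ℝ) T,
      HasDerivAt f ((p + 1) * Cp * g t ^ p - ω / (q + 1) * f t) t)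
    (hg' : ∀ t ∈ Set.Ico (0 : ℝ) T,
      HasDerivAt g ((q + 1) * Cq * f t ^ q - ω / (p + 1) * g t) t)
    (hf0 : f 0 = f₀) (hg0 : g 0 = g₀)
    (hinit : max
      (2 ^ ((p + 1) / (q + 1) * (p * q / (p * q - 1))) * (q + 1) ^ (-((p + 1) / (p * q - 1))) *
        (p + 1) ^ (-((p + 1) / (p * q - 1))) * ω ^ ((p + 1) / (p * q - 1)) *
        Cp ^ (-((1 : ℝ) / (p * q - 1))) * Cq ^ (-(p / (p * q - 1))))
      (Cq ^ (-((1 : ℝ) / (q + 1))) * Cp ^ ((1 : ℝ) / (q + 1)) * g₀ ^ ((p + 1) / (q + 1)))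
      < f₀) :
    ∀ t ∈ Set.Ico (0 : ℝ) T,
      ((Cp / Cq) ^ ((p * q - 1) / ((p + 1) * (q + 1))) * f₀ ^ (-((p * q - 1) / (p + 1)))
        - 2 ^ (-(p * q) / (q + 1)) * (q + 1) * (p + 1) * ω⁻¹ * Cq ^ ((1 : ℝ) / (q + 1)) *
          Cp ^ (q / (q + 1)) *
          (1 - Real.exp (-(ω * (p * q - 1) * t / ((p + 1) * (q + 1))))))
        ^ (-((q + 1) / (p * q - 1)))
      - (Cq * Cp⁻¹ * f₀ ^ (q + 1) - g₀ ^ (p + 1)) ^ ((1 : ℝ) / (p + 1))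
      ≤ Real.exp (ω * t / (p + 1)) * g t := by
  have hp1 : (0:ℝ) < p + 1 := by linarith
  have hq1 : (0:ℝ) < q + 1 := by linarith
  have hq1' : (q:ℝ) + 1 ≠ 0 := ne_of_gt hq1
  have hp1' : (p:ℝ) + 1 ≠ 0 := ne_of_gt hp1
  have hpq1 : (0:ℝ) < p * q - 1 := by linarith
  have hR : Cq ^ (-((1 : ℝ) / (q + 1))) * Cp ^ ((1 : ℝ) / (q + 1)) * g₀ ^ ((p + 1) / (q + 1)) < f₀ :=
    lt_of_le_of_lt (le_max_right _ _) hinit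
  set J0 : ℝ := Cq * f₀ ^ (q + 1) - Cp * g₀ ^ (p + 1) with hJ0def
  -- J0 > 0
  have hJ0 : 0 < J0 := by
    have hRpos : 0 < Cq ^ (-((1:ℝ)/(q+1))) * Cp ^ ((1:ℝ)/(q+1)) * g₀ ^ ((p+1)/(q+1)) := by
      positivity
    have h1 := Real.rpow_lt_rpow hRpos.le hR hq1
    rw [Real.mul_rpow (by positivity) (by positivity),
        Real.mul_rpow (by positivity) (by positivity),
        ← Real.rpow_mul hCq.le, ← Real.rpow_mul hCp.le, ← Real.rpow_mul hg₀.le,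
        show -((1:ℝ)/(q+1)) * (q+1) = -1 by field_simp,
        show ((1:ℝ)/(q+1)) * (q+1) = 1 by field_simp,
        show ((p:ℝ)+1)/(q+1) * (q+1) = p + 1 by field_simp,
        Real.rpow_neg_one, Real.rpow_one] at h1
    have h2 : Cq * (Cq⁻¹ * Cp * g₀ ^ (p+1)) < Cq * f₀ ^ (q+1) :=
      (mul_lt_mul_iff_right₀ hCq).2 h1
    rw [← mul_assoc, ← mul_assoc, mul_inv_cancel₀ (ne_of_gt hCq), one_mul] at h2
    simp only [hJ0def]; linarith
  -- conservation law
  have hcons : ∀ t ∈ Set.Ico (0:ℝ) T,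
      Cq * f t ^ (q+1) - Cp * g t ^ (p+1) = J0 * Real.exp (-(ω*t)) := by
    have key : ∀ s ∈ Set.Ico (0:ℝ) T,
        HasDerivAt (fun u => Real.exp (ω*u) * (Cq * f u ^ (q+1) - Cp * g u ^ (p+1))) 0 s := by
      intro s hs
      have hfs := hf' s hs
      have hgs := hg' s hs
      have hfp : HasDerivAt (fun u => f u ^ (q+1))
          (((p + 1) * Cp * g s ^ p - ω / (q + 1) * f s) * (q+1) * f s ^ q) s := by
        have h := hfs.rpow_const (p := q+1) (Or.inr (by linarith))
        rwa [show q+1-1 = q by ring] at h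
      have hgp : HasDerivAt (fun u => g u ^ (p+1))
          (((q + 1) * Cq * f s ^ q - ω / (p + 1) * g s) * (p+1) * g s ^ p) s := by
        have h := hgs.rpow_const (p := p+1) (Or.inr (by linarith))
        rwa [show p+1-1 = p by ring] at h
      have hexp : HasDerivAt (fun u : ℝ => Real.exp (ω*u)) (Real.exp (ω*s) * (ω*1)) s :=
        ((hasDerivAt_id s).const_mul ω).exp
      have hsum : HasDerivAt (fun u => Cq * f u ^ (q+1) - Cp * g u ^ (p+1))
          (Cq * (((p + 1) * Cp * g s ^ p - ω / (q + 1) * f s) * (q+1) * f s ^ q)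
            - Cp * (((q + 1) * Cq * f s ^ q - ω / (p + 1) * g s) * (p+1) * g s ^ p)) s :=
        (hfp.const_mul Cq).sub (hgp.const_mul Cp)
      have H := hexp.mul hsum
      refine H.congr_deriv ?_
      have hfqq : f s ^ (q+1) = f s ^ q * f s := by
        rw [Real.rpow_add' (hfnn s hs) hq1', Real.rpow_one]
      have hgpp : g s ^ (p+1) = g s ^ p * g s := by
        rw [Real.rpow_add' (hgnn s hs) hp1', Real.rpow_one]
      rw [hfqq, hgpp]
      field_simp
      ring
    intro t ht
    have hsub : Set.Icc (0:ℝ) t ⊆ Set.Ico 0 T := fun x hx => ⟨hx.1, lt_of_le_of_lt hx.2 ht.2⟩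
    have hconst := constant_of_has_deriv_right_zero
      (f := fun u => Real.exp (ω*u) * (Cq * f u ^ (q+1) - Cp * g u ^ (p+1))) (a := 0) (b := t)
      (fun x hx => ((key x (hsub hx)).continuousAt).continuousWithinAt)
      (fun x hx => ((key x (hsub (Set.Ico_subset_Icc_self hx))).hasDerivWithinAt))
      t (Set.right_mem_Icc.2 ht.1)
    have hconst' : Real.exp (ω*t) * (Cq * f t ^ (q+1) - Cp * g t ^ (p+1)) = J0 := by
      simpa [hf0, hg0, hJ0def] using hconst
    rw [Real.exp_neg, ← hconst']
    field_simp [Real.exp_ne_zero]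
  -- D
  have hbase : Cq * Cp⁻¹ * f₀ ^ (q + 1) - g₀ ^ (p + 1) = J0 / Cp := by
    rw [hJ0def]; field_simp
  set D : ℝ := (Cq * Cp⁻¹ * f₀ ^ (q + 1) - g₀ ^ (p + 1)) ^ ((1:ℝ)/(p+1)) with hDdef
  have hbasepos : 0 < Cq * Cp⁻¹ * f₀ ^ (q + 1) - g₀ ^ (p + 1) := by
    rw [hbase]; positivity
  have hDpos : 0 < D := Real.rpow_pos_of_pos hbasepos _
  have hDpow : D ^ (p+1) = J0 / Cp := by
    rw [hDdef, ← Real.rpow_mul hbasepos.le,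
      show (1:ℝ)/(p+1) * (p+1) = 1 by field_simp, Real.rpow_one, hbase]
  -- G
  set G : ℝ → ℝ := fun s => Real.exp (ω*s/(p+1)) * g s with hGdef
  have hGnn : ∀ t ∈ Set.Ico (0:ℝ) T, 0 ≤ G t := fun t ht =>
    mul_nonneg (Real.exp_nonneg _) (hgnn t ht)
  have hGDpos : ∀ t ∈ Set.Ico (0:ℝ) T, 0 < G t + D := fun t ht => by
    have := hGnn t ht; linarith
  have hGD : ∀ t ∈ Set.Ico (0:ℝ) T,
      HasDerivAt G ((q+1) * Cq * Real.exp (ω*t/(p+1)) * f t ^ q) t := by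
    intro t ht
    have h1 : HasDerivAt (fun s : ℝ => Real.exp (ω*s/(p+1)))
        (Real.exp (ω*t/(p+1)) * (ω/(p+1))) t := by
      have h0 : HasDerivAt (fun s : ℝ => ω*s/(p+1)) (ω/(p+1)) t := by
        simpa using ((hasDerivAt_id t).const_mul ω).div_const (p+1)
      exact h0.exp
    have h2 := h1.mul (hg' t ht)
    exact h2.congr_deriv (by ring)
  -- constants
  set μ : ℝ := (p*q-1)/(q+1) with hμdef
  have hμpos : 0 < μ := by positivity
  set K : ℝ := 2 ^ (-(p * q) / (q + 1)) * (q + 1) * (p + 1) * ω⁻¹ * Cq ^ ((1 : ℝ) / (q + 1)) *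
          Cp ^ (q / (q + 1)) with hKdef
  set lam : ℝ := ω*(p*q-1)/((p+1)*(q+1)) with hlamdef
  have hlampos : 0 < lam := by positivity
  set A0 : ℝ := (Cp / Cq) ^ ((p * q - 1) / ((p + 1) * (q + 1))) * f₀ ^ (-((p * q - 1) / (p + 1)))
    with hA0def
  set A : ℝ → ℝ := fun s => A0 - K * (1 - Real.exp (-(lam*s))) with hAdef
  -- derivative of W
  have hWD : ∀ t ∈ Set.Ico (0:ℝ) T, HasDerivAt (fun s => (G s + D)^(-μ))
      (((q+1) * Cq * Real.exp (ω*t/(p+1)) * f t ^ q) * (-μ) * (G t + D)^(-μ-1)) t := by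
    intro t ht
    exact ((hGD t ht).add_const D).rpow_const (Or.inl (ne_of_gt (hGDpos t ht)))
  -- derivative of A
  have hAD : ∀ t : ℝ, HasDerivAt A (-(K * (lam * Real.exp (-(lam*t))))) t := by
    intro t
    have h1 : HasDerivAt (fun s : ℝ => -(lam*s)) (-lam) t := by
      exact ((hasDerivAt_id t).const_mul lam).neg.congr_deriv (by simp)
    have h2 := ((h1.exp.const_sub 1).const_mul K).const_sub A0
    exact h2.congr_deriv (by ring)
  -- the key differential inequality
  have hkey : ∀ t ∈ Set.Ico (0:ℝ) T,
      ((q+1) * Cq * Real.exp (ω*t/(p+1)) * f t ^ q) * (-μ) * (G t + D)^(-μ-1)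
        ≤ -(K * (lam * Real.exp (-(lam*t)))) := by
    intro t ht
    have hGpos := hGDpos t ht
    -- conservation in terms of G
    have hg_eq : g t ^ (p+1) = Real.exp (-(ω*t)) * G t ^ (p+1) := by
      have : g t = Real.exp (-(ω*t/(p+1))) * G t := by
        simp only [hGdef, ← mul_assoc, ← Real.exp_add]
        norm_num
      rw [this, Real.mul_rpow (Real.exp_nonneg _) (hGnn t ht), aux_exp_rpow,
        show -(ω*t/(p+1)) * (p+1) = -(ω*t) by field_simp]
    have hJD : J0 = Cp * D ^ (p+1) := by rw [hDpow]; field_simp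
    have hfq1 : Cq * f t ^ (q+1) = Cp * (Real.exp (-(ω*t)) * (G t ^ (p+1) + D ^ (p+1))) := by
      have hc := hcons t ht
      rw [hg_eq, hJD] at hc
      linear_combination hc
    -- convexity lower bound
    have h2p : (0:ℝ) < 2^p := Real.rpow_pos_of_pos two_pos p
    have hconv : (2:ℝ)^(-p) * (G t + D)^(p+1) ≤ G t ^ (p+1) + D ^ (p+1) := by
      have h := aux_convex (hGnn t ht) hDpos.le (r := p+1) (by linarith)
      rw [show p+1-1 = p by ring] at h
      rw [Real.rpow_neg (by norm_num : (0:ℝ) ≤ 2)]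
      rw [inv_mul_le_iff₀ h2p] -- maybe different name
      linarith [h]
    have hflow : (Cp/Cq) * (Real.exp (-(ω*t)) * ((2:ℝ)^(-p) * (G t + D)^(p+1)))
        ≤ f t ^ (q+1) := by
      have h1 : Cp * (Real.exp (-(ω*t)) * ((2:ℝ)^(-p) * (G t + D)^(p+1)))
          ≤ Cq * f t ^ (q+1) := by
        rw [hfq1]
        have he := Real.exp_pos (-(ω*t))
        calc Cp * (Real.exp (-(ω*t)) * ((2:ℝ)^(-p) * (G t + D)^(p+1)))
            = (Cp * Real.exp (-(ω*t))) * ((2:ℝ)^(-p) * (G t + D)^(p+1)) := by ring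
          _ ≤ (Cp * Real.exp (-(ω*t))) * (G t ^ (p+1) + D ^ (p+1)) :=
              mul_le_mul_of_nonneg_left hconv (mul_pos hCp he).le
          _ = Cp * (Real.exp (-(ω*t)) * (G t ^ (p+1) + D ^ (p+1))) := by ring
      rw [div_mul_eq_mul_div, div_le_iff₀ hCq]
      linarith [h1]
    -- f^q lower bound
    have hQpos : (0:ℝ) < (Cp/Cq) * (Real.exp (-(ω*t)) * ((2:ℝ)^(-p) * (G t + D)^(p+1))) := by
      positivity
    have hfq : ((Cp/Cq) * (Real.exp (-(ω*t)) * ((2:ℝ)^(-p) * (G t + D)^(p+1)))) ^ (q/(q+1))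
        ≤ f t ^ q := by
      have h := Real.rpow_le_rpow hQpos.le hflow (by positivity : (0:ℝ) ≤ q/(q+1))
      rwa [← Real.rpow_mul (hfnn t ht), show (q+1) * (q/(q+1)) = q by field_simp] at h
    -- expansion of the power of the product
    have hexpand : ((Cp/Cq) * (Real.exp (-(ω*t)) * ((2:ℝ)^(-p) * (G t + D)^(p+1)))) ^ (q/(q+1))
        = (Cp/Cq)^(q/(q+1)) * (Real.exp (-(ω*t) * (q/(q+1))) *
            ((2:ℝ)^((-p)*(q/(q+1))) * (G t + D)^((p+1)*(q/(q+1))))) := by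
      rw [Real.mul_rpow (by positivity) (by positivity),
          Real.mul_rpow (by positivity) (by positivity),
          Real.mul_rpow (by positivity) (by positivity),
          ← Real.rpow_mul (by norm_num : (0:ℝ) ≤ 2),
          ← Real.rpow_mul hGpos.le, aux_exp_rpow]
    -- the constant identity
    have hCq1 : Cq ^ ((q:ℝ)/(q+1)) * Cq ^ ((1:ℝ)/(q+1)) = Cq := by
      rw [← Real.rpow_add hCq, show (q:ℝ)/(q+1) + 1/(q+1) = 1 by field_simp, Real.rpow_one]
    have hC : μ*((q+1)*Cq*(Cp/Cq)^(q/(q+1))*(2:ℝ)^((-p)*(q/(q+1)))) = K * lam := by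
      have ha : (0:ℝ) < Cq ^ ((q:ℝ)/(q+1)) := Real.rpow_pos_of_pos hCq _
      have e1 : K * lam = 2 ^ (-(p*q)/(q+1)) * (p*q-1) * Cq ^ ((1:ℝ)/(q+1)) * Cp ^ (q/(q+1)) := by
        rw [hKdef, hlamdef]; field_simp
      have hq' : (p*q-1)/(q+1)*(q+1) = p*q-1 := by field_simp
      have hCqz : Cq / (Cq ^ ((q:ℝ)/(q+1))) = Cq ^ ((1:ℝ)/(q+1)) := by
        rw [div_eq_iff ha.ne']; linear_combination -hCq1
      rw [e1, Real.div_rpow hCp.le hCq.le, show (-p)*(q/(q+1)) = -(p*q)/(q+1) by ring, hμdef]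
      calc (p*q-1)/(q+1)*((q+1)*Cq*(Cp^(q/(q+1))/Cq^((q:ℝ)/(q+1)))*(2:ℝ)^(-(p*q)/(q+1)))
          = ((p*q-1)/(q+1)*(q+1)) * (Cq / (Cq ^ ((q:ℝ)/(q+1)))) * Cp^(q/(q+1)) *
              (2:ℝ)^(-(p*q)/(q+1)) := by ring
        _ = (p*q-1) * Cq ^ ((1:ℝ)/(q+1)) * Cp^(q/(q+1)) * (2:ℝ)^(-(p*q)/(q+1)) := by
            rw [hq', hCqz]
        _ = 2 ^ (-(p*q)/(q+1)) * (p*q-1) * Cq ^ ((1:ℝ)/(q+1)) * Cp ^ (q/(q+1)) := by ring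
    have hE : Real.exp (ω*t/(p+1)) * Real.exp (-(ω*t)*(q/(q+1))) = Real.exp (-(lam*t)) := by
      rw [← Real.exp_add]
      congr 1
      rw [hlamdef]
      field_simp
      ring
    have hP : (G t + D)^((p+1)*(q/(q+1))) * (G t + D)^(-μ-1) = 1 := by
      rw [← Real.rpow_add hGpos, hμdef,
        show (p+1)*(q/(q+1)) + (-((p*q-1)/(q+1))-1) = 0 by field_simp; ring, Real.rpow_zero]
    -- assemble
    rw [show ((q+1) * Cq * Real.exp (ω*t/(p+1)) * f t ^ q) * (-μ) * (G t + D)^(-μ-1)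
        = -(μ*((q+1) * Cq * (Real.exp (ω*t/(p+1)) * f t ^ q)) * (G t + D)^(-μ-1)) by ring,
      neg_le_neg_iff]
    calc K * (lam * Real.exp (-(lam*t)))
        = μ*((q+1)*Cq*(Cp/Cq)^(q/(q+1))*(2:ℝ)^((-p)*(q/(q+1)))) *
            (Real.exp (ω*t/(p+1)) * Real.exp (-(ω*t)*(q/(q+1)))) *
            ((G t + D)^((p+1)*(q/(q+1))) * (G t + D)^(-μ-1)) := by
          rw [hC, hE, hP]; ring
      _ = μ*((q+1) * Cq * (Real.exp (ω*t/(p+1)) *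
            (((Cp/Cq) * (Real.exp (-(ω*t)) * ((2:ℝ)^(-p) * (G t + D)^(p+1)))) ^ (q/(q+1)))))
            * (G t + D)^(-μ-1) := by
          rw [hexpand]; ring
      _ ≤ μ*((q+1) * Cq * (Real.exp (ω*t/(p+1)) * f t ^ q)) * (G t + D)^(-μ-1) := by
          gcongr
  -- initial comparison : W 0 ≤ A 0
  have hsum_eq : g₀ ^ (p+1) + D ^ (p+1) = (Cq/Cp) * f₀ ^ (q+1) := by
    rw [hDpow, hJ0def]; field_simp; ring
  have hW0 : (g₀ + D)^(-μ) ≤ A0 := by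
    have hcf : (0:ℝ) < (Cq/Cp) * f₀ ^ (q+1) := by positivity
    have hsuper : (Cq/Cp) * f₀ ^ (q+1) ≤ (g₀ + D) ^ (p+1) := by
      rw [← hsum_eq]
      exact aux_super hg₀.le hDpos.le (by linarith)
    have h1 : ((g₀ + D) ^ (p+1)) ^ (-(μ/(p+1))) ≤ ((Cq/Cp) * f₀ ^ (q+1)) ^ (-(μ/(p+1))) :=
      Real.rpow_le_rpow_of_nonpos hcf hsuper
        (neg_nonpos.mpr (div_pos hμpos hp1).le)
    have h2 : ((g₀ + D) ^ (p+1)) ^ (-(μ/(p+1))) = (g₀ + D)^(-μ) := by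
      rw [← Real.rpow_mul (by positivity : (0:ℝ) ≤ g₀ + D),
        show (p+1) * (-(μ/(p+1))) = -μ by field_simp]
    have h3 : ((Cq/Cp) * f₀ ^ (q+1)) ^ (-(μ/(p+1))) = A0 := by
      rw [Real.mul_rpow (by positivity) (by positivity),
        ← Real.rpow_mul hf₀.le, hA0def]
      congr 1
      · rw [Real.rpow_neg (by positivity),
          ← Real.inv_rpow (by positivity), inv_div, hμdef,
          show (p*q-1)/(q+1)/(p+1) = (p*q-1)/((p+1)*(q+1)) by rw [div_div, mul_comm (q+1) (p+1)]]
      · congr 1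
        rw [hμdef]
        field_simp
    rw [← h2]
    exact h1.trans_eq h3
  -- the comparison W t ≤ A t on [0,T)
  have hmain : ∀ t ∈ Set.Ico (0:ℝ) T, (G t + D)^(-μ) ≤ A t := by
    intro t ht
    have hsub : Set.Icc (0:ℝ) t ⊆ Set.Ico 0 T := fun x hx => ⟨hx.1, lt_of_le_of_lt hx.2 ht.2⟩
    have hanti : AntitoneOn (fun s => (G s + D)^(-μ) - A s) (Set.Icc 0 t) := by
      apply antitoneOn_of_deriv_nonpos (convex_Icc 0 t)
      · intro x hx
        exact (((hWD x (hsub hx)).sub (hAD x)).continuousAt).continuousWithinAt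
      · intro x hx
        rw [interior_Icc] at hx
        exact (((hWD x (hsub (Set.Ioo_subset_Icc_self hx))).sub
          (hAD x))).differentiableAt.differentiableWithinAt
      · intro x hx
        rw [interior_Icc] at hx
        have hx' := hsub (Set.Ioo_subset_Icc_self hx)
        rw [(show HasDerivAt (fun s => (G s + D)^(-μ) - A s) _ x from (hWD x hx').sub (hAD x)).deriv]
        have := hkey x hx'
        linarith
    have h0 := hanti (Set.left_mem_Icc.2 ht.1) (Set.right_mem_Icc.2 ht.1) ht.1
    simp only at h0
    have hG0 : G 0 = g₀ := by simp [hGdef, hg0]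
    have hA0' : A 0 = A0 := by simp [hAdef]
    rw [hG0, hA0'] at h0
    have := hW0
    linarith
  -- conclusion
  intro t ht
  have hWA := hmain t ht
  have hGpos := hGDpos t ht
  have hWpos : 0 < (G t + D)^(-μ) := Real.rpow_pos_of_pos hGpos _
  have h1 : (A t) ^ (-((q+1)/(p*q-1))) ≤ ((G t + D)^(-μ)) ^ (-((q+1)/(p*q-1))) :=
    Real.rpow_le_rpow_of_nonpos hWpos hWA (neg_nonpos.mpr (div_pos hq1 hpq1).le)
  have h2 : ((G t + D)^(-μ)) ^ (-((q+1)/(p*q-1))) = G t + D := by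
    rw [← Real.rpow_mul hGpos.le, hμdef,
      show -((p*q-1)/(q+1)) * -((q+1)/(p*q-1)) = 1 by field_simp, Real.rpow_one]
  have h3 : (A t) ^ (-((q+1)/(p*q-1))) - D ≤ G t := by
    rw [h2] at h1; linarith
  have harg : -(ω * (p * q - 1) * t / ((p + 1) * (q + 1))) = -(lam * t) := by
    rw [hlamdef]; ring
  calc ((Cp / Cq) ^ ((p * q - 1) / ((p + 1) * (q + 1))) * f₀ ^ (-((p * q - 1) / (p + 1)))
        - 2 ^ (-(p * q) / (q + 1)) * (q + 1) * (p + 1) * ω⁻¹ * Cq ^ ((1 : ℝ) / (q + 1)) *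
          Cp ^ (q / (q + 1)) *
          (1 - Real.exp (-(ω * (p * q - 1) * t / ((p + 1) * (q + 1))))))
        ^ (-((q + 1) / (p * q - 1)))
      - (Cq * Cp⁻¹ * f₀ ^ (q + 1) - g₀ ^ (p + 1)) ^ ((1 : ℝ) / (p + 1))
      = (A t) ^ (-((q+1)/(p*q-1))) - D := by
        rw [harg, hAdef, hA0def, hKdef, hDdef]
    _ ≤ G t := h3
    _ = Real.exp (ω * t / (p + 1)) * g t := rfl
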